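/- Let h be a 5-ary symmetric idempotent Boolean operation, and set a₁ = h(1,0,0,0,0), a₂ = h(1,1,0,0,0), a₃ = h(1,1,1,0,0), a₄ = h(1,1,1,1,0). Then h ⊴ h^d if and only if a₁ = a₂ = 0. -/

import Mathlib

/-- An `n`-ary Boolean operation. -/
def BOp (n : ℕ) : Type := (Fin n → Bool) → Bool

/-- `Tri f g` means `f ⊴ g`: `f a ≤ g b` whenever `a ≤ b` componentwise. -/
def Tri {n : ℕ} (f g : BOp n) : Prop :=
  ∀ a b : Fin n → Bool, (∀ i, a i ≤ b i) → f a ≤ g b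

/-- `f` is monotone with respect to the componentwise order. -/
def Mono {n : ℕ} (f : BOp n) : Prop :=
  ∀ a b : Fin n → Bool, (∀ i, a i ≤ b i) → f a ≤ f b

/-- The dual of a Boolean operation: `f^d a = ¬ f ā`. -/
def Dual {n : ℕ} (f : BOp n) : BOp n := fun a => !(f (fun i => !(a i)))

/-- Idempotency: `h(a,…,a) = a`. -/
def Idem {n : ℕ} (f : BOp n) : Prop := ∀ b : Bool, f (fun _ => b) = b

/-- Symmetry: invariance under all permutations of the arguments. -/
def Symm {n : ℕ} (h : BOp n) : Prop :=
  ∀ (σ : Equiv.Perm (Fin n)) (a : Fin n → Bool), h (a ∘ σ) = h a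

/-- The tuple with `k` ones followed by zeros. -/
def ones {n : ℕ} (k : ℕ) : Fin n → Bool := fun i => decide (i.val < k)

/-- Number of `true` coordinates. -/
def cnt {n : ℕ} (a : Fin n → Bool) : ℕ :=
  (Finset.univ.filter (fun i => a i = true)).card

lemma symm_cnt {n : ℕ} {h : BOp n} (hs : Symm h) {a b : Fin n → Bool}
    (hc : cnt a = cnt b) : h a = h b := by
  have h1 : Fintype.card {i // b i = true} = Fintype.card {i // a i = true} := by
    rw [Fintype.card_subtype, Fintype.card_subtype]; exact hc.symm
  have h0 : Fintype.card {i // ¬ (b i = true)} = Fintype.card {i // ¬ (a i = true)} := by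
    rw [Fintype.card_subtype_compl, Fintype.card_subtype_compl, h1]
  let e₁ := Fintype.equivOfCardEq h1
  let e₀ := Fintype.equivOfCardEq h0
  let σ : Equiv.Perm (Fin n) :=
    ((Equiv.sumCompl (fun i => b i = true)).symm.trans
      (Equiv.sumCongr e₁ e₀)).trans (Equiv.sumCompl (fun i => a i = true))
  have key : a ∘ σ = b := by
    funext i
    by_cases hb : b i = true
    · have : σ i = (e₁ ⟨i, hb⟩ : {i // a i = true}).val := by
        simp only [σ, Equiv.trans_apply, Equiv.sumCongr_apply]
        rw [Equiv.sumCompl_symm_apply_of_pos (p := fun j => b j = true) (a := i) hb, Sum.map_inl, Equiv.sumCompl_apply_inl]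
      rw [Function.comp_apply, this, (e₁ ⟨i, hb⟩).2, hb]
    · have : σ i = (e₀ ⟨i, hb⟩ : {i // ¬ (a i = true)}).val := by
        simp only [σ, Equiv.trans_apply, Equiv.sumCongr_apply]
        rw [Equiv.sumCompl_symm_apply_of_neg (p := fun j => b j = true) (a := i) hb, Sum.map_inr, Equiv.sumCompl_apply_inr]
      rw [Function.comp_apply, this]
      simp only [Bool.not_eq_true] at hb ⊢
      have := (e₀ ⟨i, by simpa using hb⟩).2
      simp only [Bool.not_eq_true] at this
      rw [this, hb]
  rw [← key, hs σ a]

lemma cnt_ones5 : ∀ k : ℕ, k ≤ 5 → cnt (ones k : Fin 5 → Bool) = k := by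
  intro k hk
  interval_cases k <;> decide

lemma cnt_le5 (a : Fin 5 → Bool) : cnt a ≤ 5 := by
  have := Finset.card_filter_le (Finset.univ : Finset (Fin 5)) (fun i => a i = true)
  simpa [cnt] using this

lemma cnt_mono {a b : Fin 5 → Bool} (hab : ∀ i, a i ≤ b i) : cnt a ≤ cnt b := by
  apply Finset.card_le_card
  intro i hi
  simp only [Finset.mem_filter, Finset.mem_univ, true_and] at hi ⊢
  have := hab i
  rw [hi] at this
  exact Bool.le_iff_imp.mp this rfl

lemma cnt_not (b : Fin 5 → Bool) : cnt (fun i => !(b i)) = 5 - cnt b := by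
  have key : cnt b + cnt (fun i => !(b i)) = 5 := by
    have := Finset.card_filter_add_card_filter_not
      (s := (Finset.univ : Finset (Fin 5))) (p := fun i => b i = true)
    simp only [Finset.card_univ, Fintype.card_fin] at this
    have e : (Finset.filter (fun i => (!(b i)) = true) Finset.univ)
        = Finset.filter (fun i => ¬ (b i = true)) (Finset.univ : Finset (Fin 5)) := by
      apply Finset.filter_congr
      intro i _
      simp
    rw [cnt, cnt, e, this]
  omega

theorem symm5_tri_dual_iff (h : BOp 5) (hs : Symm h) (hi : Idem h) :
    Tri h (Dual h) ↔ (h (ones 1) = false ∧ h (ones 2) = false) := by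
  have h0 : h (ones 0 : Fin 5 → Bool) = false := by
    have : (ones 0 : Fin 5 → Bool) = fun _ => false := by funext i; simp [ones]
    rw [this, hi]
  constructor
  · intro T
    constructor
    · have hle : ∀ i, (ones 1 : Fin 5 → Bool) i ≤ (ones 4 : Fin 5 → Bool) i := by decide
      have := T (ones 1) (ones 4) hle
      rw [Dual] at this
      have heq : h (fun i => !((ones 4 : Fin 5 → Bool) i)) = h (ones 1) := by
        apply symm_cnt hs; decide
      rw [heq] at this
      revert this
      cases h (ones 1 : Fin 5 → Bool) <;> simp
    · have hle : ∀ i, (ones 2 : Fin 5 → Bool) i ≤ (ones 3 : Fin 5 → Bool) i := by decide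
      have := T (ones 2) (ones 3) hle
      rw [Dual] at this
      have heq : h (fun i => !((ones 3 : Fin 5 → Bool) i)) = h (ones 2) := by
        apply symm_cnt hs; decide
      rw [heq] at this
      revert this
      cases h (ones 2 : Fin 5 → Bool) <;> simp
  · rintro ⟨h1, h2⟩ a b hab
    rw [Dual]
    have hja : h a = h (ones (cnt a)) :=
      symm_cnt hs (by rw [cnt_ones5 _ (cnt_le5 a)])
    have hmb : h (fun i => !(b i)) = h (ones (5 - cnt b)) :=
      symm_cnt hs (by rw [cnt_ones5 _ (by omega), cnt_not])
    rw [hja, hmb]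
    have hsum : cnt a + (5 - cnt b) ≤ 5 := by
      have := cnt_mono hab
      have := cnt_le5 b
      omega
    have hcb5 := cnt_le5 a
    rcases Bool.eq_false_or_eq_true (h (ones (cnt a) : Fin 5 → Bool)) with ht | hf
    swap
    · rw [hf]; exact Bool.false_le _
    · have hj3 : 3 ≤ cnt a := by
        by_contra hlt
        push_neg at hlt
        interval_cases hc : (cnt a)
        · rw [ht] at h0; exact absurd h0 (by simp)
        · rw [ht] at h1; exact absurd h1 (by simp)
        · rw [ht] at h2; exact absurd h2 (by simp)
      have hm2 : 5 - cnt b ≤ 2 := by omega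
      have : h (ones (5 - cnt b) : Fin 5 → Bool) = false := by
        interval_cases hm : (5 - cnt b)
        · exact h0
        · exact h1
        · exact h2
      rw [this, ht]
      simp
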